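/- Decay of the optimality gap for the GCG iteration with predefined step sizes, one-dimensional case (Proposition 4.2, d = 1, where r = 2 and the exponent 2/(r(r−1)) equals 1). Let C > 0, let k₁, k₂ be real numbers with 1 ≤ k₂ ≤ k₁, and set δ_k = k₂/(k+k₁) for k = 0, 1, 2, …. Let (ε_k)_{k≥0} be a sequence of nonnegative real numbers satisfying ε_{k+1} ≤ (1 − δ_k + Cδ_k²)·ε_k for all k. Then for every k ≥ 0, ε_k ≤ N/(k+k₁)^{k₂}, where N = ε₀ · k₁^{k₂} · exp(C·k₂²·(k₁+1)/k₁²). -/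
import Mathlib


/-- Decay of the optimality gap for the GCG iteration with predefined step sizes
`δ_k = k₂/(k+k₁)`, one-dimensional case (Proposition 4.2, `d = 1`):
`ε_k ≤ N/(k+k₁)^{k₂}` with `N = ε₀·k₁^{k₂}·exp(C·k₂²·(k₁+1)/k₁²)`. -/
theorem optimality_gap_decay_dim_one
    (C : ℝ) (hC : 0 < C)
    (k₁ k₂ : ℝ) (h1 : 1 ≤ k₂) (h2 : k₂ ≤ k₁)
    (ε : ℕ → ℝ) (hε : ∀ k, 0 ≤ ε k)
    (hrec : ∀ k : ℕ,
      ε (k + 1) ≤ (1 - k₂ / (k + k₁) + C * (k₂ / (k + k₁)) ^ 2) * ε k) :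
    ∀ k : ℕ,
      ε k ≤ (ε 0 * k₁ ^ k₂ * Real.exp (C * k₂ ^ 2 * (k₁ + 1) / k₁ ^ 2)) / (k + k₁) ^ k₂ := by
  have hk₁ : (1:ℝ) ≤ k₁ := le_trans h1 h2
  have hk₁0 : (0:ℝ) < k₁ := by linarith
  have hk₂0 : (0:ℝ) < k₂ := by linarith
  set T : ℕ → ℝ := fun k => ∑ j ∈ Finset.range k, (k₂ / ((j:ℝ) + k₁))^2 with hT
  have hx : ∀ k : ℕ, (0:ℝ) < (k:ℝ) + k₁ := by
    intro k
    have : (0:ℝ) ≤ (k:ℝ) := Nat.cast_nonneg k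
    linarith
  have hδle : ∀ k : ℕ, k₂ / ((k:ℝ) + k₁) ≤ 1 := by
    intro k
    rw [div_le_one (hx k)]
    have : (0:ℝ) ≤ (k:ℝ) := Nat.cast_nonneg k
    linarith
  have hδpos : ∀ k : ℕ, 0 < k₂ / ((k:ℝ) + k₁) := fun k => div_pos hk₂0 (hx k)
  have hfac : ∀ k : ℕ, 0 ≤ 1 - k₂ / ((k:ℝ) + k₁) + C * (k₂ / ((k:ℝ) + k₁)) ^ 2 := by
    intro k
    have h1 := hδle k
    have h2 : 0 ≤ C * (k₂ / ((k:ℝ) + k₁)) ^ 2 := by positivity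
    linarith
  -- step inequality
  have hstep : ∀ k : ℕ,
      (1 - k₂ / ((k:ℝ) + k₁) + C * (k₂ / ((k:ℝ) + k₁)) ^ 2) * (((k:ℝ) + k₁ + 1) ^ k₂)
        ≤ Real.exp (C * (k₂ / ((k:ℝ) + k₁)) ^ 2) * ((k:ℝ) + k₁) ^ k₂ := by
    intro k
    set x : ℝ := (k:ℝ) + k₁ with hxdef
    have hx0 : 0 < x := hx k
    set δ : ℝ := k₂ / x with hδdef
    have hA : 1 - δ + C * δ ^ 2 ≤ Real.exp (-δ + C * δ ^ 2) := by
      have := Real.add_one_le_exp (-δ + C * δ ^ 2)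
      linarith
    have hB : (x + 1) ^ k₂ ≤ Real.exp δ * x ^ k₂ := by
      have hxp : (0:ℝ) < 1 + 1 / x := by positivity
      have h1' : (x + 1) ^ k₂ = x ^ k₂ * (1 + 1/x) ^ k₂ := by
        rw [← Real.mul_rpow (le_of_lt hx0) (le_of_lt hxp)]
        congr 1
        field_simp
      have h2' : (1 + 1/x) ^ k₂ ≤ Real.exp δ := by
        rw [Real.rpow_def_of_pos hxp]
        apply Real.exp_le_exp.2
        have hlog : Real.log (1 + 1/x) ≤ 1/x := by
          have := Real.log_le_sub_one_of_pos hxp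
          linarith
        calc Real.log (1 + 1/x) * k₂ ≤ (1/x) * k₂ :=
              mul_le_mul_of_nonneg_right hlog (le_of_lt hk₂0)
          _ = δ := by rw [hδdef]; ring
      calc (x + 1) ^ k₂ = x ^ k₂ * (1 + 1/x) ^ k₂ := h1'
        _ ≤ x ^ k₂ * Real.exp δ := by
            apply mul_le_mul_of_nonneg_left h2' (Real.rpow_nonneg (le_of_lt hx0) _)
        _ = Real.exp δ * x ^ k₂ := by ring
    have hfacnn : 0 ≤ 1 - δ + C * δ ^ 2 := hfac k
    calc (1 - δ + C * δ ^ 2) * ((x + 1) ^ k₂)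
        ≤ Real.exp (-δ + C * δ ^ 2) * ((x + 1) ^ k₂) := by
          apply mul_le_mul_of_nonneg_right hA (Real.rpow_nonneg (by linarith) _)
      _ ≤ Real.exp (-δ + C * δ ^ 2) * (Real.exp δ * x ^ k₂) := by
          apply mul_le_mul_of_nonneg_left hB (Real.exp_nonneg _)
      _ = Real.exp (C * δ ^ 2) * x ^ k₂ := by
          rw [← mul_assoc, ← Real.exp_add]
          ring_nf
  -- main induction
  have main : ∀ k : ℕ,
      ε k ≤ ε 0 * k₁ ^ k₂ * Real.exp (C * T k) / ((k:ℝ) + k₁) ^ k₂ := by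
    intro k
    induction k with
    | zero =>
      simp only [hT, Finset.range_zero, Finset.sum_empty, mul_zero, Real.exp_zero,
        mul_one, Nat.cast_zero, zero_add]
      rw [mul_div_assoc, div_self (ne_of_gt (Real.rpow_pos_of_pos hk₁0 k₂)), mul_one]
    | succ k ih =>
      have hxk : (0:ℝ) < (k:ℝ) + k₁ := hx k
      have hxk1 : (0:ℝ) < (k:ℝ) + k₁ + 1 := by linarith
      have hcast : ((k + 1 : ℕ) : ℝ) + k₁ = (k:ℝ) + k₁ + 1 := by push_cast; ring
      have hTsucc : T (k+1) = T k + (k₂ / ((k:ℝ) + k₁))^2 := by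
        simp [hT, Finset.sum_range_succ]
      have key : (1 - k₂ / ((k:ℝ) + k₁) + C * (k₂ / ((k:ℝ) + k₁)) ^ 2) *
          (ε 0 * k₁ ^ k₂ * Real.exp (C * T k) / ((k:ℝ) + k₁) ^ k₂)
          ≤ ε 0 * k₁ ^ k₂ * Real.exp (C * T (k+1)) / ((k:ℝ) + k₁ + 1) ^ k₂ := by
        have hexp : Real.exp (C * T (k+1)) =
            Real.exp (C * T k) * Real.exp (C * (k₂ / ((k:ℝ) + k₁))^2) := by
          rw [hTsucc, ← Real.exp_add]; ring_nf
        have hAnn : 0 ≤ ε 0 * k₁ ^ k₂ * Real.exp (C * T k) := by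
          have := hε 0
          positivity
        have hdiv : (1 - k₂ / ((k:ℝ) + k₁) + C * (k₂ / ((k:ℝ) + k₁)) ^ 2) /
            ((k:ℝ) + k₁) ^ k₂ ≤
            Real.exp (C * (k₂ / ((k:ℝ) + k₁))^2) / ((k:ℝ) + k₁ + 1) ^ k₂ := by
          rw [div_le_div_iff₀ (Real.rpow_pos_of_pos hxk _) (Real.rpow_pos_of_pos hxk1 _)]
          exact hstep k
        calc (1 - k₂ / ((k:ℝ) + k₁) + C * (k₂ / ((k:ℝ) + k₁)) ^ 2) *
              (ε 0 * k₁ ^ k₂ * Real.exp (C * T k) / ((k:ℝ) + k₁) ^ k₂)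
            = (ε 0 * k₁ ^ k₂ * Real.exp (C * T k)) *
              ((1 - k₂ / ((k:ℝ) + k₁) + C * (k₂ / ((k:ℝ) + k₁)) ^ 2) /
                ((k:ℝ) + k₁) ^ k₂) := by ring
          _ ≤ (ε 0 * k₁ ^ k₂ * Real.exp (C * T k)) *
              (Real.exp (C * (k₂ / ((k:ℝ) + k₁))^2) / ((k:ℝ) + k₁ + 1) ^ k₂) :=
              mul_le_mul_of_nonneg_left hdiv hAnn
          _ = ε 0 * k₁ ^ k₂ * Real.exp (C * T (k+1)) / ((k:ℝ) + k₁ + 1) ^ k₂ := by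
              rw [hexp]; ring
      rw [hcast]
      calc ε (k+1) ≤ (1 - k₂ / ((k:ℝ) + k₁) + C * (k₂ / ((k:ℝ) + k₁)) ^ 2) * ε k :=
            hrec k
        _ ≤ (1 - k₂ / ((k:ℝ) + k₁) + C * (k₂ / ((k:ℝ) + k₁)) ^ 2) *
            (ε 0 * k₁ ^ k₂ * Real.exp (C * T k) / ((k:ℝ) + k₁) ^ k₂) :=
            mul_le_mul_of_nonneg_left ih (hfac k)
        _ ≤ _ := key
  -- bound on T
  have hTb : ∀ k : ℕ, T (k+1) ≤ k₂^2 * (1/k₁^2 + 1/k₁ - 1/((k:ℝ) + k₁)) := by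
    intro k
    induction k with
    | zero =>
      simp only [hT, Finset.sum_range_one, Nat.cast_zero, zero_add]
      rw [div_pow]
      have : 1/k₁^2 + 1/k₁ - 1/k₁ = 1/k₁^2 := by ring
      rw [this]
      rw [mul_one_div]
    | succ k ih =>
      have hxk : (0:ℝ) < (k:ℝ) + k₁ := hx k
      have hTsucc : T (k+2) = T (k+1) + (k₂ / ((k:ℝ) + k₁ + 1))^2 := by
        simp only [hT, Finset.sum_range_succ]
        push_cast
        ring
      have hkey : (k₂ / ((k:ℝ) + k₁ + 1))^2 ≤
          k₂^2 * (1/((k:ℝ) + k₁) - 1/((k:ℝ) + k₁ + 1)) := by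
        rw [div_pow]
        have h1' : 1/((k:ℝ) + k₁ + 1)^2 ≤ 1/((k:ℝ) + k₁) - 1/((k:ℝ) + k₁ + 1) := by
          rw [div_sub_div _ _ (ne_of_gt hxk) (by positivity)]
          rw [div_le_div_iff₀ (by positivity) (by positivity)]
          ring_nf
          nlinarith
        calc k₂^2 / ((k:ℝ) + k₁ + 1)^2 = k₂^2 * (1/((k:ℝ) + k₁ + 1)^2) := by ring
          _ ≤ k₂^2 * (1/((k:ℝ) + k₁) - 1/((k:ℝ) + k₁ + 1)) := by
              apply mul_le_mul_of_nonneg_left h1' (by positivity)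
      have : k₂^2 * (1/k₁^2 + 1/k₁ - 1/((k:ℝ) + k₁)) +
          k₂^2 * (1/((k:ℝ) + k₁) - 1/((k:ℝ) + k₁ + 1)) =
          k₂^2 * (1/k₁^2 + 1/k₁ - 1/((k:ℝ) + k₁ + 1)) := by ring
      have hcast2 : ((k+1:ℕ):ℝ) + k₁ = (k:ℝ) + k₁ + 1 := by push_cast; ring
      rw [show (k+1+1) = k+2 from rfl, hTsucc, hcast2]
      linarith [hkey, ih]
  have hTfull : ∀ k : ℕ, T k ≤ k₂^2 * (1/k₁^2 + 1/k₁) := by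
    intro k
    cases k with
    | zero =>
      simp only [hT, Finset.range_zero, Finset.sum_empty]
      positivity
    | succ k =>
      have := hTb k
      have hxk : (0:ℝ) < (k:ℝ) + k₁ := hx k
      have h1' : 0 < 1/((k:ℝ) + k₁) := by positivity
      nlinarith
  -- combine
  intro k
  have hfin : C * T k ≤ C * k₂ ^ 2 * (k₁ + 1) / k₁ ^ 2 := by
    have h1' : k₂^2 * (1/k₁^2 + 1/k₁) = k₂^2 * (k₁ + 1) / k₁^2 := by
      field_simp
      ring
    have := hTfull k
    calc C * T k ≤ C * (k₂^2 * (1/k₁^2 + 1/k₁)) :=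
          mul_le_mul_of_nonneg_left this (le_of_lt hC)
      _ = C * k₂ ^ 2 * (k₁ + 1) / k₁ ^ 2 := by rw [h1']; ring
  calc ε k ≤ ε 0 * k₁ ^ k₂ * Real.exp (C * T k) / ((k:ℝ) + k₁) ^ k₂ := main k
    _ ≤ (ε 0 * k₁ ^ k₂ * Real.exp (C * k₂ ^ 2 * (k₁ + 1) / k₁ ^ 2)) / ((k:ℝ) + k₁) ^ k₂ := by
      have hε0 := hε 0
      have hd : (0:ℝ) < ((k:ℝ)+k₁) ^ k₂ := Real.rpow_pos_of_pos (hx k) _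
      have hnum : ε 0 * k₁ ^ k₂ * Real.exp (C * T k)
          ≤ ε 0 * k₁ ^ k₂ * Real.exp (C * k₂ ^ 2 * (k₁ + 1) / k₁ ^ 2) :=
        mul_le_mul_of_nonneg_left (Real.exp_le_exp.2 hfin) (by positivity)
      exact (div_le_div_iff_of_pos_right hd).mpr hnum
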